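/- arXiv:2401.17830 — 2 statements merged into one kernel-verified Lean document; each statement's English description precedes it below -/
import Mathlib

section
/- Let δ = |δ|e^{iθ} ∈ ℝ² \ {0} with |δ| > 0, and define f(φ₁, φ₂) = −(1/2)log 2 − (1/2)log(1 − cos(φ₁ − φ₂)) − δ₁(sin φ₁ + sin φ₂) + δ₂(cos φ₁ + cos φ₂) on {(φ₁,φ₂) ∈ ℝ² : φ₁ − φ₂ ∉ 2πℤ}, where δ = (δ₁,δ₂). Then the minimum of f is attained exactly (up to exchanging φ₁ and φ₂ and adding multiples of 2π) at φ₁ = θ + θ_δ and φ₂ = θ + π − θ_δ, where θ_δ = arcsin(√(1 + 1/(16|δ|²)) − 1/(4|δ|)). -/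
open Real

lemma stmt5_core (r c y : ℝ) (hr : 0 < r) (hc0 : 0 < c) (_hc1 : c < 1)
    (hcc : 2*r*(1-c^2) = c) (hy0 : 0 ≤ y) (hy : y^2 < 1) :
    (-(1/2)*Real.log (1-c^2) - 2*r*c ≤ -(1/2)*Real.log (1-y^2) - 2*r*y) ∧
    (-(1/2)*Real.log (1-y^2) - 2*r*y = -(1/2)*Real.log (1-c^2) - 2*r*c → y = c) := by
  have h1c : 0 < 1 - c^2 := by nlinarith
  have h1y : 0 < 1 - y^2 := by linarith
  set u := (1-y^2)/(1-c^2) with hu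
  have hu0 : 0 < u := div_pos h1y h1c
  have hlogu : Real.log (1-y^2) = Real.log u + Real.log (1-c^2) := by
    rw [hu, Real.log_div (ne_of_gt h1y) (ne_of_gt h1c)]; ring
  have hdiff : (-(1/2)*Real.log (1-y^2) - 2*r*y) - (-(1/2)*Real.log (1-c^2) - 2*r*c)
      = -(1/2)*Real.log u - 2*r*(y-c) := by rw [hlogu]; ring
  have h1c' : (1:ℝ) - c^2 = c/(2*r) := by field_simp; linarith
  have hquad : -(1/2)*(u-1) - 2*r*(y-c) = (r/c)*(y-c)^2 := by
    rw [hu, h1c']; field_simp; linear_combination (-1)*hcc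
  have hsq : 0 ≤ (r/c)*(y-c)^2 := by positivity
  have hlogle : Real.log u ≤ u - 1 := Real.log_le_sub_one_of_pos hu0
  constructor
  · linarith
  · intro heq
    by_contra hne
    have hy2c2 : y^2 ≠ c^2 := by
      intro h
      exact hne (by nlinarith)
    have hu1 : u ≠ 1 := by
      intro h
      rw [hu, div_eq_one_iff_eq (ne_of_gt h1c)] at h
      exact hy2c2 (by linarith)
    have := Real.log_lt_sub_one_of_pos hu0 hu1
    linarith

set_option maxHeartbeats 1000000 in
/-- minimisation of the renormalised energy (in angular variables)
for two boundary vortices on the unit circle, with DMI vector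
`δ = |δ|e^{iθ} = (r cos θ, r sin θ)`, `r = |δ| > 0`. The minimum of `f` is
attained exactly, up to exchanging `φ₁` and `φ₂` and adding multiples of `2π`,
at `φ₁ = θ + θ_δ`, `φ₂ = θ + π − θ_δ`. -/
theorem stmt_5 (r θ : ℝ) (hr : 0 < r)
    (f : ℝ → ℝ → ℝ)
    (hf : ∀ φ₁ φ₂ : ℝ, f φ₁ φ₂ =
      -(1 / 2) * Real.log 2 - (1 / 2) * Real.log (1 - Real.cos (φ₁ - φ₂))
        - (r * Real.cos θ) * (Real.sin φ₁ + Real.sin φ₂)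
        + (r * Real.sin θ) * (Real.cos φ₁ + Real.cos φ₂))
    (θδ : ℝ)
    (hθδ : θδ = Real.arcsin (Real.sqrt (1 + 1 / (16 * r ^ 2)) - 1 / (4 * r))) :
    (∀ φ₁ φ₂ : ℝ, (¬ ∃ k : ℤ, φ₁ - φ₂ = 2 * Real.pi * k) →
      f (θ + θδ) (θ + Real.pi - θδ) ≤ f φ₁ φ₂) ∧
    (∀ φ₁ φ₂ : ℝ, (¬ ∃ k : ℤ, φ₁ - φ₂ = 2 * Real.pi * k) →
      (f φ₁ φ₂ = f (θ + θδ) (θ + Real.pi - θδ) ↔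
        (∃ k l : ℤ,
          (φ₁ = θ + θδ + 2 * Real.pi * k ∧ φ₂ = θ + Real.pi - θδ + 2 * Real.pi * l) ∨
          (φ₁ = θ + Real.pi - θδ + 2 * Real.pi * k ∧ φ₂ = θ + θδ + 2 * Real.pi * l)))) := by
  have hr' : r ≠ 0 := ne_of_gt hr
  obtain ⟨c, hcdef⟩ : ∃ c : ℝ, c = Real.sqrt (1 + 1 / (16 * r ^ 2)) - 1 / (4 * r) := ⟨_, rfl⟩
  rw [← hcdef] at hθδ
  have h16 : (0:ℝ) < 1 + 1 / (16 * r ^ 2) := by positivity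
  have hsq : (Real.sqrt (1 + 1 / (16 * r ^ 2)))^2 = 1 + 1 / (16 * r ^ 2) :=
    Real.sq_sqrt (le_of_lt h16)
  have hsnn : 0 ≤ Real.sqrt (1 + 1 / (16 * r ^ 2)) := Real.sqrt_nonneg _
  have ht0 : (0:ℝ) < 1 / (4 * r) := by positivity
  have hsum0 : c + 1 / (4 * r) = Real.sqrt (1 + 1 / (16 * r ^ 2)) := by rw [hcdef]; ring
  have h2 : (c + 1 / (4 * r))^2 = 1 + 1 / (16 * r ^ 2) := by rw [hsum0]; exact hsq
  have hc2 : c^2 + c/(2*r) = 1 := by linear_combination h2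
  have hrinv : r * r⁻¹ = 1 := mul_inv_cancel₀ hr'
  have hcc : 2*r*(1 - c^2) = c := by linear_combination (-(2*r))*hc2 + c*hrinv
  have hc0 : 0 < c := by
    have htlt : (1/(4*r))^2 < (c + 1/(4*r))^2 := by
      rw [h2, show (1/(4*r))^2 = 1/(16*r^2) by ring]
      linarith
    have := lt_of_pow_lt_pow_left₀ 2 (by rw [hsum0]; exact hsnn) htlt
    linarith
  have h1mc : 0 < 1 - c^2 := by nlinarith [hcc, hc0, hr]
  have hc1 : c < 1 := by nlinarith [h1mc, hc0]
  have hsin : Real.sin θδ = c := by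
    rw [hθδ]; exact Real.sin_arcsin (by linarith) (le_of_lt hc1)
  have hcosθδ : 0 < Real.cos θδ := by
    rw [hθδ, Real.cos_arcsin]
    exact Real.sqrt_pos.mpr h1mc
  -- key reformulation
  have key : ∀ φ₁ φ₂ : ℝ, Real.sin ((φ₁ - φ₂)/2) ≠ 0 →
      f φ₁ φ₂ = -Real.log 2 - (1/2)*Real.log (1 - Real.cos ((φ₁-φ₂)/2)^2)
        - 2*r*Real.sin ((φ₁+φ₂)/2 - θ)*Real.cos ((φ₁-φ₂)/2) := by
    intro φ₁ φ₂ hsd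
    have h2' : 0 < Real.sin ((φ₁-φ₂)/2)^2 := (sq_nonneg _).lt_of_ne (Ne.symm (pow_ne_zero 2 hsd))
    have h1 := Real.sin_sq_add_cos_sq ((φ₁-φ₂)/2)
    have hpos : 0 < 1 - Real.cos ((φ₁-φ₂)/2)^2 := by linarith
    have hcos2 : 1 - Real.cos (φ₁ - φ₂) = 2*(1 - Real.cos ((φ₁-φ₂)/2)^2) := by
      rw [show φ₁ - φ₂ = 2*((φ₁-φ₂)/2) by ring, Real.cos_two_mul]; ring
    have hsum : Real.sin φ₁ + Real.sin φ₂
        = 2*Real.sin ((φ₁+φ₂)/2)*Real.cos ((φ₁-φ₂)/2) := by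
      have h := Real.sin_sub_sin φ₁ (-φ₂)
      rw [Real.sin_neg, sub_neg_eq_add, show φ₁ - -φ₂ = φ₁ + φ₂ by ring,
        show φ₁ + -φ₂ = φ₁ - φ₂ by ring] at h
      exact h
    rw [hf, hcos2, Real.log_mul two_ne_zero (ne_of_gt hpos), hsum, Real.cos_add_cos,
      Real.sin_sub]
    ring
  have hoff : ∀ φ₁ φ₂ : ℝ, (¬ ∃ k : ℤ, φ₁ - φ₂ = 2 * Real.pi * k) →
      Real.sin ((φ₁-φ₂)/2) ≠ 0 := by
    intro φ₁ φ₂ h hcon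
    obtain ⟨n, hn⟩ := Real.sin_eq_zero_iff.mp hcon
    exact h ⟨n, by linarith⟩
  -- the value at the claimed minimiser
  have hM : f (θ + θδ) (θ + Real.pi - θδ)
      = -Real.log 2 - (1/2)*Real.log (1 - c^2) - 2*r*c := by
    have hsd : Real.sin (((θ + θδ) - (θ + Real.pi - θδ))/2) ≠ 0 := by
      rw [show ((θ + θδ) - (θ + Real.pi - θδ))/2 = -(Real.pi/2 - θδ) by ring,
        Real.sin_neg, Real.sin_pi_div_two_sub]
      exact neg_ne_zero.mpr (ne_of_gt hcosθδ)
    rw [key _ _ hsd,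
      show ((θ + θδ) - (θ + Real.pi - θδ))/2 = -(Real.pi/2 - θδ) by ring,
      show ((θ + θδ) + (θ + Real.pi - θδ))/2 - θ = Real.pi/2 by ring,
      Real.cos_neg, Real.cos_pi_div_two_sub, Real.sin_pi_div_two, hsin]
    ring
  -- main estimate + rigidity
  have main : ∀ φ₁ φ₂ : ℝ, (¬ ∃ k : ℤ, φ₁ - φ₂ = 2 * Real.pi * k) →
      f (θ + θδ) (θ + Real.pi - θδ) ≤ f φ₁ φ₂ ∧
      (f φ₁ φ₂ = f (θ + θδ) (θ + Real.pi - θδ) →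
        ∃ k l : ℤ,
          (φ₁ = θ + θδ + 2 * Real.pi * k ∧ φ₂ = θ + Real.pi - θδ + 2 * Real.pi * l) ∨
          (φ₁ = θ + Real.pi - θδ + 2 * Real.pi * k ∧ φ₂ = θ + θδ + 2 * Real.pi * l)) := by
    intro φ₁ φ₂ hne
    have hsd := hoff φ₁ φ₂ hne
    obtain ⟨d, hd⟩ : ∃ d : ℝ, d = (φ₁ - φ₂)/2 := ⟨_, rfl⟩
    obtain ⟨s, hs⟩ : ∃ s : ℝ, s = (φ₁ + φ₂)/2 - θ := ⟨_, rfl⟩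
    rw [← hd] at hsd
    have hx2 : Real.cos d ^ 2 < 1 := by
      have h2' : 0 < Real.sin d ^ 2 := (sq_nonneg _).lt_of_ne (Ne.symm (pow_ne_zero 2 hsd))
      have h1 := Real.sin_sq_add_cos_sq d
      linarith
    have hcore := stmt5_core r c |Real.cos d| hr hc0 hc1 hcc (abs_nonneg _)
      (by rw [sq_abs]; exact hx2)
    rw [sq_abs] at hcore
    have hfval : f φ₁ φ₂ = -Real.log 2 - (1/2)*Real.log (1 - Real.cos d^2)
        - 2*r*Real.sin s * Real.cos d := by
      rw [hd, hs]; exact key φ₁ φ₂ (by rw [← hd]; exact hsd)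
    have hb1 : Real.sin s * Real.cos d ≤ |Real.cos d| :=
      calc Real.sin s * Real.cos d ≤ |Real.sin s * Real.cos d| := le_abs_self _
        _ = |Real.sin s| * |Real.cos d| := abs_mul _ _
        _ ≤ 1 * |Real.cos d| :=
            mul_le_mul_of_nonneg_right (Real.abs_sin_le_one s) (abs_nonneg _)
        _ = |Real.cos d| := one_mul _
    have h2r : (0:ℝ) ≤ 2*r := by linarith
    have hB := mul_le_mul_of_nonneg_left hb1 h2r
    constructor
    · rw [hM, hfval]; linarith [hcore.1, hB]
    · intro heq
      rw [hfval, hM] at heq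
      have hAeq : -(1/2)*Real.log (1 - Real.cos d^2) - 2*r*|Real.cos d|
          = -(1/2)*Real.log (1-c^2) - 2*r*c := by linarith [hcore.1, hB]
      have hBeq : Real.sin s * Real.cos d = |Real.cos d| := by
        have h2' : 2*r*(Real.sin s * Real.cos d) = 2*r*|Real.cos d| := by
          linarith [hcore.1, hB]
        exact mul_left_cancel₀ (by positivity) h2'
      have hxc : |Real.cos d| = c := hcore.2 hAeq
      rw [hxc] at hBeq
      have hφ1 : φ₁ = θ + s + d := by rw [hs, hd]; ring
      have hφ2 : φ₂ = θ + s - d := by rw [hs, hd]; ring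
      rcases (abs_eq (le_of_lt hc0)).mp hxc with hcd | hcd
      · -- cos d = c, sin s = 1
        have hss : Real.sin s = 1 := by
          rw [hcd] at hBeq
          exact mul_right_cancel₀ (ne_of_gt hc0) (by linarith : Real.sin s * c = 1 * c)
        have hcc' : Real.cos d = Real.cos (Real.pi/2 - θδ) := by
          rw [Real.cos_pi_div_two_sub, hsin, hcd]
        obtain ⟨k, hk⟩ := Real.cos_eq_cos_iff.mp hcc'
        obtain ⟨m, hm⟩ := Real.sin_eq_one_iff.mp hss
        rcases hk with hk | hk
        · exact ⟨m - k, m + k, Or.inr ⟨by push_cast; linarith, by push_cast; linarith⟩⟩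
        · exact ⟨m + k, m - k, Or.inl ⟨by push_cast; linarith, by push_cast; linarith⟩⟩
      · -- cos d = -c, sin s = -1
        have hss : Real.sin s = -1 := by
          rw [hcd] at hBeq
          have h0 : (Real.sin s + 1) * c = 0 := by linear_combination -hBeq
          rcases mul_eq_zero.mp h0 with h | h
          · linarith
          · exact absurd h (ne_of_gt hc0)
        have hcc' : Real.cos d = Real.cos (Real.pi - (Real.pi/2 - θδ)) := by
          rw [hcd, Real.cos_pi_sub, Real.cos_pi_div_two_sub, hsin]
        obtain ⟨k, hk⟩ := Real.cos_eq_cos_iff.mp hcc'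
        obtain ⟨m, hm⟩ := Real.sin_eq_neg_one_iff.mp hss
        rcases hk with hk | hk
        · exact ⟨m - k, m + k - 1, Or.inl ⟨by push_cast; linarith, by push_cast; linarith⟩⟩
        · exact ⟨m + k - 1, m - k, Or.inr ⟨by push_cast; linarith, by push_cast; linarith⟩⟩
  -- periodicity and symmetry
  have hper : ∀ (a b : ℝ) (k l : ℤ), f (a + 2*Real.pi*k) (b + 2*Real.pi*l) = f a b := by
    intro a b k l
    rw [hf, hf,
      show (a + 2*Real.pi*(k:ℝ)) - (b + 2*Real.pi*(l:ℝ))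
        = (a - b) + (((k - l : ℤ)):ℝ)*(2*Real.pi) by push_cast; ring,
      Real.cos_add_int_mul_two_pi,
      show a + 2*Real.pi*(k:ℝ) = a + (k:ℝ)*(2*Real.pi) by ring,
      show b + 2*Real.pi*(l:ℝ) = b + (l:ℝ)*(2*Real.pi) by ring,
      Real.sin_add_int_mul_two_pi, Real.sin_add_int_mul_two_pi,
      Real.cos_add_int_mul_two_pi, Real.cos_add_int_mul_two_pi]
  have hsym : ∀ a b : ℝ, f a b = f b a := by
    intro a b
    rw [hf, hf, show a - b = -(b - a) by ring, Real.cos_neg]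
    ring
  refine ⟨fun φ₁ φ₂ hne => (main φ₁ φ₂ hne).1, fun φ₁ φ₂ hne => ⟨(main φ₁ φ₂ hne).2, ?_⟩⟩
  rintro ⟨k, l, ⟨h1, h2⟩ | ⟨h1, h2⟩⟩
  · rw [h1, h2, hper]
  · rw [h1, h2, hper]
    exact hsym _ _
end

section
/- Let δ = |δ|e^{iθ} ∈ ℝ² with |δ| > 0 and consider distinct points a₁, a₂ on the unit circle with a₂ = −a₁ (diametrically opposed). If (a₁, a₂) is a critical point of W(a₁,a₂) = −2π log|a₁ − a₂| + 2πδ·(a₁^⊥ + a₂^⊥) on {(a₁,a₂) ∈ ∂B₁ × ∂B₁ : a₁ ≠ a₂}, then a₁ = ±δ^⊥/|δ|, and this critical point is not a local minimum (the Hessian of the associated angular function f has negative determinant −|δ|² < 0 there). -/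
lemma stmt7_aux_ineq (r m u : ℝ) (hr : 0 < r) (hm0 : 0 < m) (hm1 : m ≤ 1)
    (hmr : m ≤ r / 4) (hu0 : 0 < u) (hu1 : u ≤ 1) :
    -(2 * r) * (Real.sin (m * u) * Real.sin u) < Real.log (Real.cos (m * u)) := by
  have hmu0 : 0 < m * u := mul_pos hm0 hu0
  have hmu1 : m * u ≤ 1 := by nlinarith
  have hs1 : m * u / 2 ≤ Real.sin (m * u) := by
    nlinarith [Real.sin_gt_sub_cube hmu0,
      mul_nonneg (mul_nonneg hmu0.le (by linarith : (0:ℝ) ≤ 1 - m * u))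
        (by linarith : (0:ℝ) ≤ 1 + m * u)]
  have hs2 : u / 2 ≤ Real.sin u := by
    nlinarith [Real.sin_gt_sub_cube hu0,
      mul_nonneg (mul_nonneg hu0.le (by linarith : (0:ℝ) ≤ 1 - u))
        (by linarith : (0:ℝ) ≤ 1 + u)]
  have hc : 1 - (m * u) ^ 2 / 2 ≤ Real.cos (m * u) := Real.one_sub_sq_div_two_le_cos
  have hx2 : (m * u) ^ 2 ≤ 1 := by nlinarith
  have h1 : (0 : ℝ) < 1 - (m * u) ^ 2 / 2 := by nlinarith
  have h2 : Real.exp (-(m * u) ^ 2) ≤ 1 - (m * u) ^ 2 / 2 := by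
    rw [Real.exp_neg, inv_eq_one_div, div_le_iff₀ (Real.exp_pos _)]
    have hx4 : (m * u) ^ 4 ≤ (m * u) ^ 2 := by nlinarith [sq_nonneg (m * u)]
    nlinarith [mul_nonneg h1.le
      (by linarith [Real.add_one_le_exp ((m * u) ^ 2)] :
        (0:ℝ) ≤ Real.exp ((m * u) ^ 2) - ((m * u) ^ 2 + 1))]
  have hlog : -(m * u) ^ 2 ≤ Real.log (Real.cos (m * u)) := by
    calc -(m * u) ^ 2 ≤ Real.log (1 - (m * u) ^ 2 / 2) :=
          (Real.le_log_iff_exp_le h1).mpr h2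
      _ ≤ Real.log (Real.cos (m * u)) := Real.log_le_log h1 hc
  have h4 : m * u / 2 * (u / 2) ≤ Real.sin (m * u) * Real.sin u :=
    mul_le_mul hs1 hs2 (by linarith) (by linarith)
  nlinarith [h4, hlog, mul_pos hr (mul_pos hm0 (mul_pos hu0 hu0)),
    mul_nonneg (by linarith : (0:ℝ) ≤ r / 4 - m) (mul_pos hm0 (mul_pos hu0 hu0)).le,
    mul_le_mul_of_nonneg_left h4 hr.le]

/-- The criticality relation extracted from the vanishing derivative. -/
lemma stmt7_key (r θ φ₁ φ₂ : ℝ)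
    (hdiam : Real.cos (φ₁ - φ₂) = -1)
    (hsin : Real.sin (φ₁ - φ₂) = 0)
    (hcrit : fderiv ℝ (fun p : ℝ × ℝ =>
      -(1 / 2) * Real.log 2 - (1 / 2) * Real.log (1 - Real.cos (p.1 - p.2))
        - (r * Real.cos θ) * (Real.sin p.1 + Real.sin p.2)
        + (r * Real.sin θ) * (Real.cos p.1 + Real.cos p.2)) (φ₁, φ₂) = 0) :
    r * Real.cos θ * Real.cos φ₁ + r * Real.sin θ * Real.sin φ₁ = 0 := by
  have hne : (1 : ℝ) - Real.cos (φ₁ - φ₂) ≠ 0 := by rw [hdiam]; norm_num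
  set L1 : ℝ × ℝ →L[ℝ] ℝ :=
    ContinuousLinearMap.fst ℝ ℝ ℝ - ContinuousLinearMap.snd ℝ ℝ ℝ with hL1
  have hd1 : HasFDerivAt (fun p : ℝ × ℝ => p.1 - p.2) L1 (φ₁, φ₂) :=
    hasFDerivAt_fst.sub hasFDerivAt_snd
  have hd2 : HasFDerivAt (fun p : ℝ × ℝ => Real.cos (p.1 - p.2))
      ((-Real.sin (φ₁ - φ₂)) • L1) (φ₁, φ₂) :=
    ((Real.hasDerivAt_cos (φ₁ - φ₂)).comp_hasFDerivAt ((φ₁, φ₂) : ℝ × ℝ) hd1 :)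
  have hd3 : HasFDerivAt (fun p : ℝ × ℝ => 1 - Real.cos (p.1 - p.2))
      ((Real.sin (φ₁ - φ₂)) • L1) (φ₁, φ₂) := by
    have h := (hasFDerivAt_const (1 : ℝ) ((φ₁, φ₂) : ℝ × ℝ)).sub hd2
    rw [show (Real.sin (φ₁ - φ₂)) • L1 = 0 - (-Real.sin (φ₁ - φ₂)) • L1 by module]
    exact h
  have hd4 : HasFDerivAt (fun p : ℝ × ℝ => Real.log (1 - Real.cos (p.1 - p.2)))
      ((1 - Real.cos (φ₁ - φ₂))⁻¹ • ((Real.sin (φ₁ - φ₂)) • L1)) (φ₁, φ₂) :=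
    ((Real.hasDerivAt_log hne).comp_hasFDerivAt ((φ₁, φ₂) : ℝ × ℝ) hd3 :)
  have hd5 : HasFDerivAt (fun p : ℝ × ℝ => Real.sin p.1)
      (Real.cos φ₁ • ContinuousLinearMap.fst ℝ ℝ ℝ) (φ₁, φ₂) :=
    ((Real.hasDerivAt_sin φ₁).comp_hasFDerivAt ((φ₁, φ₂) : ℝ × ℝ) (hasFDerivAt_fst (𝕜 := ℝ) (p := ((φ₁, φ₂) : ℝ × ℝ))) :)
  have hd6 : HasFDerivAt (fun p : ℝ × ℝ => Real.sin p.2)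
      (Real.cos φ₂ • ContinuousLinearMap.snd ℝ ℝ ℝ) (φ₁, φ₂) :=
    ((Real.hasDerivAt_sin φ₂).comp_hasFDerivAt ((φ₁, φ₂) : ℝ × ℝ) (hasFDerivAt_snd (𝕜 := ℝ) (p := ((φ₁, φ₂) : ℝ × ℝ))) :)
  have hd7 : HasFDerivAt (fun p : ℝ × ℝ => Real.cos p.1)
      ((-Real.sin φ₁) • ContinuousLinearMap.fst ℝ ℝ ℝ) (φ₁, φ₂) :=
    ((Real.hasDerivAt_cos φ₁).comp_hasFDerivAt ((φ₁, φ₂) : ℝ × ℝ) (hasFDerivAt_fst (𝕜 := ℝ) (p := ((φ₁, φ₂) : ℝ × ℝ))) :)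
  have hd8 : HasFDerivAt (fun p : ℝ × ℝ => Real.cos p.2)
      ((-Real.sin φ₂) • ContinuousLinearMap.snd ℝ ℝ ℝ) (φ₁, φ₂) :=
    ((Real.hasDerivAt_cos φ₂).comp_hasFDerivAt ((φ₁, φ₂) : ℝ × ℝ) (hasFDerivAt_snd (𝕜 := ℝ) (p := ((φ₁, φ₂) : ℝ × ℝ))) :)
  have hdF := (((hasFDerivAt_const (-(1 / 2) * Real.log 2) ((φ₁, φ₂) : ℝ × ℝ)).sub
      (hd4.const_mul (1 / 2))).sub
      ((hd5.add hd6).const_mul (r * Real.cos θ))).add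
      ((hd7.add hd8).const_mul (r * Real.sin θ))
  have hL0 := hcrit
  rw [HasFDerivAt.fderiv (f := fun p : ℝ × ℝ =>
      -(1 / 2) * Real.log 2 - (1 / 2) * Real.log (1 - Real.cos (p.1 - p.2))
        - (r * Real.cos θ) * (Real.sin p.1 + Real.sin p.2)
        + (r * Real.sin θ) * (Real.cos p.1 + Real.cos p.2)) hdF] at hL0
  have h10 := congrArg (fun T : ℝ × ℝ →L[ℝ] ℝ => T (1, 0)) hL0
  simp [hL1, hsin, ContinuousLinearMap.sub_apply, ContinuousLinearMap.add_apply,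
    ContinuousLinearMap.smul_apply] at h10
  linarith

/-- The value of the energy expression along the perturbed curve. -/
lemma stmt7_curve_val (r θ φ₁ φ₂ a u : ℝ)
    (hdiam : Real.cos (φ₁ - φ₂) = -1)
    (hsin : Real.sin (φ₁ - φ₂) = 0)
    (hc2 : Real.cos φ₂ = -Real.cos φ₁)
    (hs2 : Real.sin φ₂ = -Real.sin φ₁)
    (hkey : r * Real.cos θ * Real.cos φ₁ + r * Real.sin θ * Real.sin φ₁ = 0) :
    -(1 / 2) * Real.log 2
        - (1 / 2) * Real.log (1 - Real.cos ((φ₁ + (1+a)*u) - (φ₂ + (1-a)*u)))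
        - (r * Real.cos θ) * (Real.sin (φ₁ + (1+a)*u) + Real.sin (φ₂ + (1-a)*u))
        + (r * Real.sin θ) * (Real.cos (φ₁ + (1+a)*u) + Real.cos (φ₂ + (1-a)*u))
      = -(1 / 2) * Real.log 2 - (1 / 2) * Real.log (2 * Real.cos (a*u) ^ 2)
        + 2 * (r * (Real.cos θ * Real.sin φ₁ - Real.sin θ * Real.cos φ₁)) *
            (Real.sin (a*u) * Real.sin u) := by
  have harg : 1 - Real.cos ((φ₁ + (1+a)*u) - (φ₂ + (1-a)*u)) = 2 * Real.cos (a*u) ^ 2 := by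
    rw [show (φ₁ + (1+a)*u) - (φ₂ + (1-a)*u) = (φ₁ - φ₂) + 2*(a*u) by ring,
      Real.cos_add, hdiam, hsin, Real.cos_two_mul]
    ring
  rw [harg]
  have hlin : - (r * Real.cos θ) * (Real.sin (φ₁ + (1+a)*u) + Real.sin (φ₂ + (1-a)*u))
      + (r * Real.sin θ) * (Real.cos (φ₁ + (1+a)*u) + Real.cos (φ₂ + (1-a)*u))
      = 2 * (r * (Real.cos θ * Real.sin φ₁ - Real.sin θ * Real.cos φ₁)) *
          (Real.sin (a*u) * Real.sin u) := by
    rw [show (1+a)*u = u + a*u by ring, show (1-a)*u = u - a*u by ring]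
    simp only [Real.sin_add, Real.cos_add, Real.sin_sub, Real.cos_sub, hc2, hs2]
    linear_combination (-2 * Real.sin (a*u) * Real.cos u) * hkey
  linarith [hlin]

set_option maxHeartbeats 2000000 in
/-- a diametrically-opposed critical point of the renormalised
energy on the unit circle (in angular variables, with `δ = (r cos θ, r sin θ)`,
`r = |δ| > 0`) must satisfy `a₁ = ±δ^⊥/|δ|`; moreover the determinant of the
Hessian of the angular function `f` there equals `−|δ|² < 0`, so the critical
point is not a local minimum. -/
theorem stmt_7 (r θ : ℝ) (hr : 0 < r)
    (F : ℝ × ℝ → ℝ)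
    (hF : ∀ p : ℝ × ℝ, F p =
      -(1 / 2) * Real.log 2 - (1 / 2) * Real.log (1 - Real.cos (p.1 - p.2))
        - (r * Real.cos θ) * (Real.sin p.1 + Real.sin p.2)
        + (r * Real.sin θ) * (Real.cos p.1 + Real.cos p.2))
    (φ₁ φ₂ : ℝ)
    (hdiam : Real.cos (φ₁ - φ₂) = -1)
    (hcrit : fderiv ℝ F (φ₁, φ₂) = 0) :
    ((Real.cos φ₁, Real.sin φ₁) = (-Real.sin θ, Real.cos θ) ∨
      (Real.cos φ₁, Real.sin φ₁) = (Real.sin θ, -Real.cos θ)) ∧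
    (((Real.cos φ₁ + Real.cos φ₂) * (-(r * Real.sin θ)) +
        (Real.sin φ₁ + Real.sin φ₂) * (r * Real.cos θ)) /
          (2 * (1 - Real.cos (φ₁ - φ₂))) +
      (Real.cos φ₁ * (-(r * Real.sin θ)) + Real.sin φ₁ * (r * Real.cos θ)) *
        (Real.cos φ₂ * (-(r * Real.sin θ)) + Real.sin φ₂ * (r * Real.cos θ))
        = -r ^ 2) ∧
    ¬ IsLocalMin F (φ₁, φ₂) := by
  have hFe : F = fun p : ℝ × ℝ =>
      -(1 / 2) * Real.log 2 - (1 / 2) * Real.log (1 - Real.cos (p.1 - p.2))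
        - (r * Real.cos θ) * (Real.sin p.1 + Real.sin p.2)
        + (r * Real.sin θ) * (Real.cos p.1 + Real.cos p.2) := funext hF
  -- basic trig consequences of `hdiam`
  have hpy1 := Real.sin_sq_add_cos_sq φ₁
  have hpy2 := Real.sin_sq_add_cos_sq φ₂
  have hpyθ := Real.sin_sq_add_cos_sq θ
  have hcs := Real.cos_sub φ₁ φ₂
  rw [hdiam] at hcs
  have hsin : Real.sin (φ₁ - φ₂) = 0 := by
    have h := Real.sin_sq_add_cos_sq (φ₁ - φ₂)
    rw [hdiam] at h
    have h2 : Real.sin (φ₁ - φ₂) ^ 2 = 0 := by nlinarith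
    exact (pow_eq_zero_iff two_ne_zero).mp h2
  have hc2 : Real.cos φ₂ = -Real.cos φ₁ := by
    nlinarith [sq_nonneg (Real.cos φ₁ + Real.cos φ₂), sq_nonneg (Real.sin φ₁ + Real.sin φ₂)]
  have hs2 : Real.sin φ₂ = -Real.sin φ₁ := by
    nlinarith [sq_nonneg (Real.cos φ₁ + Real.cos φ₂), sq_nonneg (Real.sin φ₁ + Real.sin φ₂)]
  -- the criticality relation
  rw [hFe] at hcrit
  have hkey : r * Real.cos θ * Real.cos φ₁ + r * Real.sin θ * Real.sin φ₁ = 0 :=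
    stmt7_key r θ φ₁ φ₂ hdiam hsin hcrit
  have horth : Real.cos θ * Real.cos φ₁ + Real.sin θ * Real.sin φ₁ = 0 := by
    have h : r * (Real.cos θ * Real.cos φ₁ + Real.sin θ * Real.sin φ₁) = 0 := by
      linarith [hkey]
    exact (mul_eq_zero.mp h).resolve_left (ne_of_gt hr)
  have ht2 : (Real.cos θ * Real.sin φ₁ - Real.sin θ * Real.cos φ₁) ^ 2 = 1 := by
    linear_combination (Real.sin θ ^ 2 + Real.cos θ ^ 2) * hpy1 + hpyθ -
      (Real.cos θ * Real.cos φ₁ + Real.sin θ * Real.sin φ₁) * horth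
  have hcases : Real.cos θ * Real.sin φ₁ - Real.sin θ * Real.cos φ₁ = 1 ∨
      Real.cos θ * Real.sin φ₁ - Real.sin θ * Real.cos φ₁ = -1 := by
    have h : (Real.cos θ * Real.sin φ₁ - Real.sin θ * Real.cos φ₁ - 1) *
        (Real.cos θ * Real.sin φ₁ - Real.sin θ * Real.cos φ₁ + 1) = 0 := by
      linear_combination ht2
    rcases mul_eq_zero.mp h with h | h
    · left; linarith
    · right; linarith
  refine ⟨?_, ?_, ?_⟩
  · -- conclusion 1
    rcases hcases with ht | ht
    · left
      have h1 : Real.cos φ₁ = -Real.sin θ := by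
        linear_combination Real.cos θ * horth - Real.sin θ * ht - Real.cos φ₁ * hpyθ
      have h2 : Real.sin φ₁ = Real.cos θ := by
        linear_combination Real.sin θ * horth + Real.cos θ * ht - Real.sin φ₁ * hpyθ
      rw [h1, h2]
    · right
      have h1 : Real.cos φ₁ = Real.sin θ := by
        linear_combination Real.cos θ * horth - Real.sin θ * ht - Real.cos φ₁ * hpyθ
      have h2 : Real.sin φ₁ = -Real.cos θ := by
        linear_combination Real.sin θ * horth + Real.cos θ * ht - Real.sin φ₁ * hpyθ
      rw [h1, h2]
  · -- conclusion 2: Hessian determinant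
    rw [hdiam, hc2, hs2]
    linear_combination (-(r ^ 2)) * ht2
  · -- conclusion 3: not a local minimum
    intro hmin
    have hF0 : F (φ₁, φ₂) = -Real.log 2 := by
      rw [hF (φ₁, φ₂)]
      simp only
      rw [hdiam, hc2, hs2, show (1 : ℝ) - -1 = 2 by norm_num]
      ring
    set m : ℝ := min 1 (r / 4) with hm
    have hm0 : 0 < m := lt_min one_pos (by linarith)
    have hm1 : m ≤ 1 := min_le_left _ _
    have hmr : m ≤ r / 4 := min_le_right _ _
    -- given a direction in which `F` strictly decreases along a curve, contradict `hmin`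
    have main : ∀ a : ℝ,
        (∀ u : ℝ, 0 < u → u ≤ 1 →
          F (φ₁ + (1 + a) * u, φ₂ + (1 - a) * u) < -Real.log 2) → False := by
      intro a hlt
      have hγ : Continuous fun u : ℝ =>
          ((φ₁ + (1 + a) * u, φ₂ + (1 - a) * u) : ℝ × ℝ) := by fun_prop
      have htend : Filter.Tendsto
          (fun u : ℝ => ((φ₁ + (1 + a) * u, φ₂ + (1 - a) * u) : ℝ × ℝ))
          (nhds 0) (nhds (φ₁, φ₂)) := by
        have h0 : ((φ₁ + (1 + a) * 0, φ₂ + (1 - a) * 0) : ℝ × ℝ) = (φ₁, φ₂) := by simp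
        simpa [h0] using hγ.tendsto 0
      have hev : ∀ᶠ u in nhds (0 : ℝ),
          F (φ₁, φ₂) ≤ F (φ₁ + (1 + a) * u, φ₂ + (1 - a) * u) := htend.eventually hmin
      have hev' : ∀ᶠ u in nhdsWithin (0 : ℝ) (Set.Ioi 0),
          F (φ₁, φ₂) ≤ F (φ₁ + (1 + a) * u, φ₂ + (1 - a) * u) :=
        hev.filter_mono nhdsWithin_le_nhds
      have hioc : ∀ᶠ u in nhdsWithin (0 : ℝ) (Set.Ioi 0), u ∈ Set.Ioc (0 : ℝ) 1 :=
        Ioc_mem_nhdsGT_of_mem ⟨le_refl 0, one_pos⟩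
      obtain ⟨u, hu1, hu2⟩ := (hev'.and hioc).exists
      rw [hF0] at hu1
      exact absurd hu1 (not_le.mpr (hlt u hu2.1 hu2.2))
    have hcommon : ∀ u : ℝ, 0 < u → u ≤ 1 →
        0 < Real.cos (m * u) ∧ m * u ≤ 1 := by
      intro u hu0 hu1
      have hmu1 : m * u ≤ 1 := by nlinarith
      refine ⟨?_, hmu1⟩
      nlinarith [Real.one_sub_sq_div_two_le_cos (x := m * u), mul_pos hm0 hu0]
    have hlog2 : ∀ u : ℝ, 0 < u → u ≤ 1 →
        Real.log (2 * Real.cos (m * u) ^ 2)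
          = Real.log 2 + 2 * Real.log (Real.cos (m * u)) := by
      intro u hu0 hu1
      obtain ⟨hcpos, hmu1⟩ := hcommon u hu0 hu1
      rw [Real.log_mul two_ne_zero (by positivity), Real.log_pow]
      push_cast
      ring
    rcases hcases with ht | ht
    · refine main (-m) ?_
      intro u hu0 hu1
      obtain ⟨hcpos, hmu1⟩ := hcommon u hu0 hu1
      rw [hF (φ₁ + (1 + -m) * u, φ₂ + (1 - -m) * u)]
      simp only
      rw [stmt7_curve_val r θ φ₁ φ₂ (-m) u hdiam hsin hc2 hs2 hkey, ht,
        show (-m) * u = -(m * u) by ring, Real.sin_neg, Real.cos_neg,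
        hlog2 u hu0 hu1]
      have haux := stmt7_aux_ineq r m u hr hm0 hm1 hmr hu0 hu1
      nlinarith [haux]
    · refine main m ?_
      intro u hu0 hu1
      obtain ⟨hcpos, hmu1⟩ := hcommon u hu0 hu1
      rw [hF (φ₁ + (1 + m) * u, φ₂ + (1 - m) * u)]
      simp only
      rw [stmt7_curve_val r θ φ₁ φ₂ m u hdiam hsin hc2 hs2 hkey, ht,
        hlog2 u hu0 hu1]
      have haux := stmt7_aux_ineq r m u hr hm0 hm1 hmr hu0 hu1
      nlinarith [haux]
end
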